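/- Let F be a finite set of reduction operators relative to (G,<), and let C^F = (∧F) ∨ T₀, where T₀ is the reduction operator whose kernel is the span K⟨NF(F)⟩ of NF(F). Then F ∪ {C^F} is a completion of F, i.e. F ∪ {C^F} is confluent and ∧(F ∪ {C^F}) = ∧F. -/

import Mathlib

open Finsupp

variable {K G : Type*} [Field K] [LinearOrder G] [WellFoundedLT G]

/-- `T` is a reduction operator relative to `(G, <)`. -/
def IsRedOp (T : (G →₀ K) →ₗ[K] (G →₀ K)) : Prop :=
  T ∘ₗ T = T ∧
    ∀ g : G, T (single g 1) = single g 1 ∨ (T (single g 1)).support.max < (g : WithBot G)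

/-- The set of `T`-normal forms. -/
def NFset (T : (G →₀ K) →ₗ[K] (G →₀ K)) : Set G :=
  {g | T (single g 1) = single g 1}

lemma IsRedOp.idem {T : (G →₀ K) →ₗ[K] (G →₀ K)} (h : IsRedOp T) (x : G →₀ K) :
    T (T x) = T x := by
  have := LinearMap.ext_iff.mp h.1 x
  simpa using this

/-- A reduction operator cannot produce a coefficient above all elements of the support. -/
lemma IsRedOp.apply_eq_zero_of_lt {T : (G →₀ K) →ₗ[K] (G →₀ K)} (hT : IsRedOp T)
    (y : G →₀ K) (g : G) (hy : ∀ h ∈ y.support, h < g) : T y g = 0 := by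
  induction y using Finsupp.induction with
  | zero => simp
  | single_add a b f haf hb ih =>
    have ha : a < g := by
      apply hy
      rw [Finsupp.mem_support_iff]
      simp only [Finsupp.add_apply, Finsupp.single_eq_same]
      have : f a = 0 := Finsupp.notMem_support_iff.mp haf
      simpa [this] using hb
    have hf : ∀ h ∈ f.support, h < g := by
      intro h hh
      apply hy
      rw [Finsupp.mem_support_iff]
      have hha : h ≠ a := by rintro rfl; exact haf hh
      simp only [Finsupp.add_apply, Finsupp.single_eq_of_ne hha]
      simpa using Finsupp.mem_support_iff.mp hh
    have hsingle : T (single a b) g = 0 := by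
      rw [← Finsupp.smul_single_one a b, map_smul, Finsupp.smul_apply]
      rcases hT.2 a with h | h
      · rw [h, Finsupp.single_eq_of_ne (ne_of_lt ha).symm, smul_zero]
      · have : g ∉ (T (single a 1)).support := by
          intro hg
          exact absurd ((Finset.le_max hg).trans_lt (h.trans (WithBot.coe_lt_coe.mpr ha)))
            (lt_irrefl _)
        rw [Finsupp.notMem_support_iff.mp this, smul_zero]
    rw [map_add, Finsupp.add_apply, hsingle, ih hf, add_zero]

/-- If `g` is the leading monomial of a nonzero element of `ker T`, then `g` is
not a `T`-normal form. -/
lemma not_mem_NFset_of_lm {T : (G →₀ K) →ₗ[K] (G →₀ K)} (hT : IsRedOp T)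
    {v : G →₀ K} (hv : T v = 0) (hv0 : v ≠ 0) {g : G}
    (hmax : v.support.max = (g : WithBot G)) : g ∉ NFset T := by
  intro hg
  have hgmem : g ∈ v.support := Finset.mem_of_max hmax
  have hvg : v g ≠ 0 := Finsupp.mem_support_iff.mp hgmem
  have herase : ∀ h ∈ (Finsupp.erase g v).support, h < g := by
    intro h hh
    rw [Finsupp.support_erase, Finset.mem_erase] at hh
    exact lt_of_le_of_ne (WithBot.coe_le_coe.mp ((Finset.le_max hh.2).trans_eq hmax)) hh.1
  have h2 : T (Finsupp.erase g v) g = 0 := hT.apply_eq_zero_of_lt _ g herase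
  have h3 : T (single g (v g)) g = v g := by
    rw [← Finsupp.smul_single_one g (v g), map_smul, hg, Finsupp.smul_apply,
      Finsupp.single_eq_same, smul_eq_mul, mul_one]
  have h4 : v = Finsupp.erase g v + single g (v g) := (Finsupp.erase_add_single g v).symm
  have : T v g = v g := by
    conv_lhs => rw [h4]
    rw [map_add, Finsupp.add_apply, h2, h3, zero_add]
  rw [hv] at this
  exact hvg this.symm

/-- If `g` is not a `T`-normal form, it is the leading monomial of a nonzero
element of `ker T`. -/
lemma exists_ker_witness {T : (G →₀ K) →ₗ[K] (G →₀ K)} (hT : IsRedOp T) {g : G}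
    (hg : g ∉ NFset T) :
    ∃ v : G →₀ K, T v = 0 ∧ v ≠ 0 ∧ v.support.max = (g : WithBot G) := by
  classical
  have hlt : (T (single g 1)).support.max < (g : WithBot G) := (hT.2 g).resolve_left hg
  have hTg : T (single g 1) g = 0 := by
    apply Finsupp.notMem_support_iff.mp
    intro hmem
    exact absurd ((Finset.le_max hmem).trans_lt hlt) (lt_irrefl _)
  have hvg : (single g 1 - T (single g 1) : G →₀ K) g = 1 := by
    rw [Finsupp.sub_apply, hTg, Finsupp.single_eq_same, sub_zero]
  refine ⟨single g 1 - T (single g 1), ?_, ?_, ?_⟩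
  · rw [map_sub, hT.idem, sub_self]
  · intro h
    rw [h] at hvg
    simp at hvg
  · refine le_antisymm (Finset.max_le ?_) (Finset.le_max ?_)
    · intro a hamem
      rcases Finset.mem_union.mp (Finsupp.support_sub hamem) with h | h
      · rw [Finsupp.support_single_ne_zero g one_ne_zero, Finset.mem_singleton] at h
        exact h ▸ le_refl _
      · exact le_of_lt ((Finset.le_max h).trans_lt hlt)
    · rw [Finsupp.mem_support_iff, hvg]
      exact one_ne_zero

/-- Normal forms are antitone with respect to kernels. -/
lemma NFset_subset {T T' : (G →₀ K) →ₗ[K] (G →₀ K)} (hT : IsRedOp T) (hT' : IsRedOp T')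
    (hker : LinearMap.ker T ≤ LinearMap.ker T') : NFset T' ⊆ NFset T := by
  intro g hg
  by_contra hng
  obtain ⟨v, hv0, hvne, hvmax⟩ := exists_ker_witness hT hng
  exact not_mem_NFset_of_lm hT' (LinearMap.mem_ker.mp (hker (LinearMap.mem_ker.mpr hv0)))
    hvne hvmax hg

open Classical in
/-- Key reduction lemma: any element of `⨆ ker (T i)` can be reduced, modulo
elements of the kernels, to one supported on the common normal forms, changing
only the coefficients at or below the largest non-normal-form monomial. -/
lemma reduce_lemma {n : ℕ} (T : Fin n → (G →₀ K) →ₗ[K] (G →₀ K)) (hT : ∀ i, IsRedOp (T i)) :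
    ∀ m : WithBot G, ∀ v : G →₀ K,
      (v.support.filter (fun x => x ∉ ⋂ i, NFset (T i))).max = m →
      v ∈ (⨆ i, LinearMap.ker (T i)) →
      ∃ v', v' ∈ (⨆ i, LinearMap.ker (T i)) ∧ (↑v'.support : Set G) ⊆ ⋂ i, NFset (T i) ∧
        ∀ x : G, v' x ≠ v x → (x : WithBot G) ≤ m := by
  intro m
  induction m using WellFoundedLT.induction with
  | _ m ih =>
    intro v hμ hv
    rcases eq_or_ne (v.support.filter (fun x => x ∉ ⋂ i, NFset (T i))) ∅ with hemp | hne
    · refine ⟨v, hv, ?_, ?_⟩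
      · intro x hx
        by_contra hxn
        exact absurd hemp (Finset.ne_empty_of_mem (Finset.mem_filter.mpr ⟨hx, hxn⟩))
      · intro x hx; exact absurd rfl hx
    · obtain ⟨h, hmem⟩ := Finset.nonempty_iff_ne_empty.mpr hne
      obtain ⟨h₀, hh₀⟩ := Finset.max_of_mem hmem
      have hm : m = (h₀ : WithBot G) := hμ ▸ hh₀
      have hh₀mem : h₀ ∈ v.support.filter (fun x => x ∉ ⋂ i, NFset (T i)) :=
        Finset.mem_of_max hh₀
      rw [Finset.mem_filter] at hh₀mem
      obtain ⟨hh₀supp, hh₀nf⟩ := hh₀mem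
      obtain ⟨i, hi⟩ : ∃ i, h₀ ∉ NFset (T i) := by
        by_contra hc
        push_neg at hc
        exact hh₀nf (Set.mem_iInter.mpr hc)
      -- reduction step
      have hlt : (T i (single h₀ 1)).support.max < (h₀ : WithBot G) :=
        ((hT i).2 h₀).resolve_left hi
      set w : G →₀ K := v h₀ • (single h₀ 1 - T i (single h₀ 1)) with hw
      have hwker : w ∈ LinearMap.ker (T i) := by
        rw [LinearMap.mem_ker, map_smul, map_sub, (hT i).idem, sub_self, smul_zero]
      have hwsup : w ∈ (⨆ j, LinearMap.ker (T j)) :=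
        le_iSup (fun j => LinearMap.ker (T j)) i hwker
      have hTh₀ : T i (single h₀ 1) h₀ = 0 := by
        rw [Finsupp.notMem_support_iff.mp]
        intro hmem'
        exact absurd ((Finset.le_max hmem').trans_lt hlt) (lt_irrefl _)
      have hwh₀ : w h₀ = v h₀ := by
        rw [hw, Finsupp.smul_apply, Finsupp.sub_apply, hTh₀, Finsupp.single_eq_same,
          sub_zero, smul_eq_mul, mul_one]
      have hwx : ∀ x : G, w x ≠ 0 → (x : WithBot G) ≤ (h₀ : WithBot G) := by
        intro x hx
        have : x ∈ w.support := Finsupp.mem_support_iff.mpr hx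
        rw [hw] at this
        have := Finsupp.support_smul this
        rcases Finset.mem_union.mp (Finsupp.support_sub this) with hc | hc
        · rw [Finsupp.support_single_ne_zero h₀ one_ne_zero] at hc
          simp only [Finset.mem_singleton] at hc
          exact hc ▸ le_refl _
        · exact le_of_lt ((Finset.le_max hc).trans_lt hlt)
      set u := v - w with hu
      have huker : u ∈ (⨆ j, LinearMap.ker (T j)) := Submodule.sub_mem _ hv hwsup
      have huh₀ : u h₀ = 0 := by rw [hu, Finsupp.sub_apply, hwh₀, sub_self]
      -- measure decreases
      have hμu : (u.support.filter (fun x => x ∉ ⋂ i, NFset (T i))).max < m := by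
        rw [hm]
        rcases hmu : (u.support.filter (fun x => x ∉ ⋂ i, NFset (T i))).max with _ | x
        · exact WithBot.bot_lt_coe _
        · refine (WithBot.coe_lt_coe (a := x) (b := h₀)).mpr ?_
          have hxmem := Finset.mem_of_max hmu
          rw [Finset.mem_filter] at hxmem
          obtain ⟨hxsupp, hxnf⟩ := hxmem
          have hxne : x ≠ h₀ := by
            rintro rfl
            exact Finsupp.mem_support_iff.mp hxsupp huh₀
          have hux : u x ≠ 0 := Finsupp.mem_support_iff.mp hxsupp
          rcases eq_or_ne (w x) 0 with hwx0 | hwx0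
          · have hvx : v x ≠ 0 := by
              rw [hu, Finsupp.sub_apply, hwx0, sub_zero] at hux
              exact hux
            have : x ∈ v.support.filter (fun x => x ∉ ⋂ i, NFset (T i)) :=
              Finset.mem_filter.mpr ⟨Finsupp.mem_support_iff.mpr hvx, hxnf⟩
            have := (Finset.le_max this).trans_eq hh₀
            exact lt_of_le_of_ne (WithBot.coe_le_coe.mp this) hxne
          · exact lt_of_le_of_ne (WithBot.coe_le_coe.mp (hwx x hwx0)) hxne
      obtain ⟨v', hv'mem, hv'supp, hv'eq⟩ := ih _ hμu u rfl huker
      refine ⟨v', hv'mem, hv'supp, ?_⟩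
      intro x hx
      rcases eq_or_ne (v' x) (u x) with he | he
      · have : u x ≠ v x := fun hc => hx (he.trans hc)
        have : w x ≠ 0 := by
          intro hc
          exact this (by rw [hu, Finsupp.sub_apply, hc, sub_zero])
        exact hm ▸ hwx x this
      · exact le_of_lt ((hv'eq x he).trans_lt hμu)

theorem completion_exists (n : ℕ)
    (T : Fin n → (G →₀ K) →ₗ[K] (G →₀ K)) (hT : ∀ i, IsRedOp (T i))
    (W T₀ Cf : (G →₀ K) →ₗ[K] (G →₀ K))
    (hW : IsRedOp W) (hT₀ : IsRedOp T₀) (hCf : IsRedOp Cf)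
    (hWker : LinearMap.ker W = ⨆ i, LinearMap.ker (T i))
    (hT₀ker : LinearMap.ker T₀ =
      Submodule.span K ((fun g => single g (1 : K)) '' ⋂ i, NFset (T i)))
    (hCfker : LinearMap.ker Cf = LinearMap.ker W ⊓ LinearMap.ker T₀) :
    ((⋂ i, NFset (T i)) ∩ NFset Cf = NFset W) ∧
      LinearMap.ker W ⊔ LinearMap.ker Cf = LinearMap.ker W := by
  classical
  constructor
  · apply Set.Subset.antisymm
    · -- hard direction
      rintro g ⟨hgF, hgCf⟩
      by_contra hgW
      obtain ⟨v, hv0, hvne, hvmax⟩ := exists_ker_witness hW hgW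
      have hvker : v ∈ (⨆ i, LinearMap.ker (T i)) := by
        rw [← hWker]; exact LinearMap.mem_ker.mpr hv0
      obtain ⟨v', hv'mem, hv'supp, hv'eq⟩ :=
        reduce_lemma T hT _ v rfl hvker
      -- the measure is < g
      have hμlt : (v.support.filter (fun x => x ∉ ⋂ i, NFset (T i))).max < (g : WithBot G) := by
        rcases hmu : (v.support.filter (fun x => x ∉ ⋂ i, NFset (T i))).max with _ | x
        · exact WithBot.bot_lt_coe _
        · refine (WithBot.coe_lt_coe (a := x) (b := g)).mpr ?_
          have hxmem := Finset.mem_of_max hmu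
          rw [Finset.mem_filter] at hxmem
          have hxg : x ≠ g := by
            rintro rfl
            exact hxmem.2 hgF
          exact lt_of_le_of_ne
            (WithBot.coe_le_coe.mp ((Finset.le_max hxmem.1).trans_eq hvmax)) hxg
      have hv'g : v' g = v g := by
        by_contra hc
        exact absurd ((hv'eq g hc).trans_lt hμlt) (lt_irrefl _)
      have hvg : v g ≠ 0 := Finsupp.mem_support_iff.mp (Finset.mem_of_max hvmax)
      have hv'g0 : v' g ≠ 0 := hv'g ▸ hvg
      have hv'ne : v' ≠ 0 := fun hc => hv'g0 (by rw [hc]; rfl)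
      have hv'max : v'.support.max = (g : WithBot G) := by
        refine le_antisymm (Finset.max_le ?_) ?_
        · intro a ha
          rcases eq_or_ne (v' a) (v a) with he | he
          · have : a ∈ v.support := Finsupp.mem_support_iff.mpr
              (he ▸ Finsupp.mem_support_iff.mp ha)
            exact (Finset.le_max this).trans_eq hvmax
          · exact (hv'eq a he).trans (le_of_lt hμlt)
        · exact Finset.le_max (Finsupp.mem_support_iff.mpr hv'g0)
      -- v' ∈ ker Cf
      have hv'W : v' ∈ LinearMap.ker W := by rw [hWker]; exact hv'mem
      have hv'T₀ : v' ∈ LinearMap.ker T₀ := by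
        rw [hT₀ker, ← Finsupp.supported_eq_span_single]
        exact (Finsupp.mem_supported K v').mpr hv'supp
      have hv'Cf : Cf v' = 0 := by
        have : v' ∈ LinearMap.ker Cf := by
          rw [hCfker]; exact ⟨hv'W, hv'T₀⟩
        exact LinearMap.mem_ker.mp this
      exact not_mem_NFset_of_lm hCf hv'Cf hv'ne hv'max hgCf
    · -- easy direction
      intro g hg
      constructor
      · rw [Set.mem_iInter]
        intro i
        refine NFset_subset (hT i) hW ?_ hg
        rw [hWker]
        exact le_iSup (fun j => LinearMap.ker (T j)) i
      · refine NFset_subset hCf hW ?_ hg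
        rw [hCfker]
        exact inf_le_left
  · rw [sup_eq_left, hCfker]
    exact inf_le_left
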